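/- Let 𝔤 = 𝔤_{3.2} ⊕ 𝔤₁ be the 4-dimensional real Lie algebra with basis e₁,...,e₄ and nonzero brackets [e₂,e₃] = e₁ − e₂ and [e₃,e₁] = e₁. A 4×4 real matrix R equals η·Id + D for some η ∈ ℝ and some derivation D of 𝔤 if and only if R₂₁ = R₃₁ = R₄₁ = 0, R₃₂ = R₄₂ = 0, R₁₄ = R₂₄ = R₃₄ = 0, and R₂₂ = R₁₁. In this case η = R₃₃. -/
import Mathlib

open Matrix

def br (x y : Fin 4 → ℝ) : Fin 4 → ℝ :=
  ![(x 1 * y 2 - x 2 * y 1) + (x 2 * y 0 - x 0 * y 2), -(x 1 * y 2 - x 2 * y 1), (0:ℝ), (0:ℝ)]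

def IsDer (D : Matrix (Fin 4) (Fin 4) ℝ) : Prop :=
  ∀ x y : Fin 4 → ℝ, D.mulVec (br x y) = br (D.mulVec x) y + br x (D.mulVec y)

lemma der_iff (D : Matrix (Fin 4) (Fin 4) ℝ) :
    IsDer D ↔ (D 1 0 = 0 ∧ D 2 0 = 0 ∧ D 3 0 = 0 ∧ D 2 1 = 0 ∧ D 3 1 = 0 ∧
      D 0 3 = 0 ∧ D 1 3 = 0 ∧ D 2 3 = 0 ∧ D 1 1 = D 0 0 ∧ D 2 2 = 0) := by
  constructor
  · intro hD
    have h010 := congrFun (hD ![1,0,0,0] ![0,1,0,0]) 0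
    have h011 := congrFun (hD ![1,0,0,0] ![0,1,0,0]) 1
    have h020 := congrFun (hD ![1,0,0,0] ![0,0,1,0]) 0
    have h023 := congrFun (hD ![1,0,0,0] ![0,0,1,0]) 3
    have h120 := congrFun (hD ![0,1,0,0] ![0,0,1,0]) 0
    have h121 := congrFun (hD ![0,1,0,0] ![0,0,1,0]) 1
    have h123 := congrFun (hD ![0,1,0,0] ![0,0,1,0]) 3
    have h030 := congrFun (hD ![1,0,0,0] ![0,0,0,1]) 0
    have h230 := congrFun (hD ![0,0,1,0] ![0,0,0,1]) 0
    have h231 := congrFun (hD ![0,0,1,0] ![0,0,0,1]) 1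
    simp [br, Matrix.mulVec, dotProduct, Fin.sum_univ_four] at h010 h011 h020 h023 h120 h121 h123 h030 h230 h231
    refine ⟨by linarith, by linarith, by linarith, by linarith, by linarith,
      by linarith, by linarith, by linarith, by linarith, by linarith⟩
  · rintro ⟨h10,h20,h30,h21,h31,h03,h13,h23,h11,h22⟩ x y
    funext i
    fin_cases i <;>
      simp [br, Matrix.mulVec, dotProduct, Fin.sum_univ_four, h10,h20,h30,h21,h31,h03,h13,h23,h11,h22] <;>
      ring

theorem stmt_3 (R : Matrix (Fin 4) (Fin 4) ℝ) :
    ((∃ (η : ℝ) (D : Matrix (Fin 4) (Fin 4) ℝ), IsDer D ∧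
        R = η • (1 : Matrix (Fin 4) (Fin 4) ℝ) + D) ↔
      (R 1 0 = 0 ∧ R 2 0 = 0 ∧ R 3 0 = 0 ∧ R 2 1 = 0 ∧ R 3 1 = 0 ∧ R 0 3 = 0 ∧ R 1 3 = 0 ∧ R 2 3 = 0 ∧ R 1 1 = R 0 0)) ∧
    (∀ (η : ℝ) (D : Matrix (Fin 4) (Fin 4) ℝ), IsDer D →
      R = η • (1 : Matrix (Fin 4) (Fin 4) ℝ) + D → η = R 2 2) := by
  constructor
  · constructor
    · rintro ⟨η, D, hD, rfl⟩
      obtain ⟨h10,h20,h30,h21,h31,h03,h13,h23,h11,h22⟩ := (der_iff D).mp hD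
      simp [Matrix.add_apply, Matrix.smul_apply, Matrix.one_apply, h10,h20,h30,h21,h31,h03,h13,h23,h11,h22]
    · rintro ⟨h10,h20,h30,h21,h31,h03,h13,h23,h11⟩
      refine ⟨R 2 2, R - R 2 2 • 1, (der_iff _).mpr ?_, by abel⟩
      simp [Matrix.sub_apply, Matrix.smul_apply, Matrix.one_apply, h10,h20,h30,h21,h31,h03,h13,h23,h11]
  · intro η D hD hR
    obtain ⟨-,-,-,-,-,-,-,-,-,h22⟩ := (der_iff D).mp hD
    simp [hR, Matrix.add_apply, Matrix.smul_apply, Matrix.one_apply, h22]
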